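/- Let 0 < ε ≤ 1/4 and let h : [0, ∞) × ℝ → ℝ be continuously differentiable and satisfy, for every t ≥ 0: h(t, ·) is 2π-periodic, h(t, θ + π/2) = h(t, θ) for all θ, h(t, −θ) = −h(t, θ) for all θ, h(t, θ) ≥ 0 for θ ∈ [0, π/4], and h(t, θ) = 0 for θ ∈ [ε, π/4]. Suppose h solves ∂ₜ h(t, θ) + 2 H(t, θ) ∂_θ h(t, θ) = 0 for all t ≥ 0 and θ, where H(t, θ) := (1/4) ∫₀^{π/4} ( |sin(2θ − 2θ')| − |sin(2θ + 2θ')| ) h(t, θ') dθ'. Let I(t) := ∫₀^{π/4} h(t, θ) dθ and assume I(0) > 0. Then for all t ≥ 0: 1/( t + I(0)^{−1} ) ≤ I(t) ≤ 1/( (1 − 8ε²) t + I(0)^{−1} ). -/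

import Mathlib

open Real Set MeasureTheory intervalIntegral

noncomputable section

/-- The stream-function coefficient of the 1D model for radially homogeneous 2D Euler,
for 4-fold symmetric odd data:
`H(θ) = (1/4) ∫₀^{π/4} (|sin(2θ − 2θ')| − |sin(2θ + 2θ')|) h(θ') dθ'`. -/
def streamH (h : ℝ → ℝ) (θ : ℝ) : ℝ :=
  1 / 4 * ∫ θ' in (0 : ℝ)..(Real.pi / 4),
    (|Real.sin (2 * θ - 2 * θ')| - |Real.sin (2 * θ + 2 * θ')|) * h θ'

/-- The mass `I(t) = ∫₀^{π/4} h(t,θ) dθ`. -/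
def mass (h : ℝ → ℝ → ℝ) (t : ℝ) : ℝ := ∫ θ in (0 : ℝ)..(Real.pi / 4), h t θ

namespace OneDEulerAux

def Af (g : ℝ → ℝ) (θ : ℝ) : ℝ := ∫ x in (0:ℝ)..θ, Real.sin (2*x) * g x
def Bf (g : ℝ → ℝ) (θ : ℝ) : ℝ := ∫ x in θ..(Real.pi/4), Real.cos (2*x) * g x

def Phi (g : ℝ → ℝ) (θ : ℝ) : ℝ :=
  (Real.cos (2*θ) * Af g θ + Real.sin (2*θ) * Bf g θ) * g θ + (Af g θ)^2 + (Bf g θ)^2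

lemma streamH_eq (g : ℝ → ℝ) (hg : Continuous g) {θ : ℝ} (hθ : θ ∈ Icc 0 (Real.pi/4)) :
    streamH g θ = -(1/2) * (Real.cos (2*θ) * Af g θ + Real.sin (2*θ) * Bf g θ) := by
  obtain ⟨hθ0, hθ1⟩ := hθ
  have hcont : Continuous fun θ' => (|Real.sin (2 * θ - 2 * θ')| - |Real.sin (2 * θ + 2 * θ')|) * g θ' := by
    continuity
  have hsplit :
      (∫ θ' in (0:ℝ)..θ, (|Real.sin (2 * θ - 2 * θ')| - |Real.sin (2 * θ + 2 * θ')|) * g θ')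
      + (∫ θ' in θ..(Real.pi/4), (|Real.sin (2 * θ - 2 * θ')| - |Real.sin (2 * θ + 2 * θ')|) * g θ')
      = ∫ θ' in (0:ℝ)..(Real.pi/4), (|Real.sin (2 * θ - 2 * θ')| - |Real.sin (2 * θ + 2 * θ')|) * g θ' :=
    integral_add_adjacent_intervals (hcont.intervalIntegrable _ _) (hcont.intervalIntegrable _ _)
  have h1 : (∫ θ' in (0:ℝ)..θ, (|Real.sin (2 * θ - 2 * θ')| - |Real.sin (2 * θ + 2 * θ')|) * g θ')
      = -2 * Real.cos (2*θ) * Af g θ := by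
    rw [show -2 * Real.cos (2*θ) * Af g θ
        = ∫ x in (0:ℝ)..θ, -2 * Real.cos (2*θ) * (Real.sin (2*x) * g x) from
      (intervalIntegral.integral_const_mul _ _).symm]
    apply intervalIntegral.integral_congr
    intro x hx
    rw [uIcc_of_le hθ0] at hx
    obtain ⟨hx0, hx1⟩ := hx
    have e1 : |Real.sin (2 * θ - 2 * x)| = Real.sin (2 * θ - 2 * x) := by
      rw [abs_of_nonneg]
      apply Real.sin_nonneg_of_nonneg_of_le_pi <;> nlinarith [Real.pi_gt_three]
    have e2 : |Real.sin (2 * θ + 2 * x)| = Real.sin (2 * θ + 2 * x) := by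
      rw [abs_of_nonneg]
      apply Real.sin_nonneg_of_nonneg_of_le_pi <;> nlinarith [Real.pi_gt_three]
    show (|Real.sin (2 * θ - 2 * x)| - |Real.sin (2 * θ + 2 * x)|) * g x = _
    rw [e1, e2, Real.sin_sub, Real.sin_add]
    ring
  have h2 : (∫ θ' in θ..(Real.pi/4), (|Real.sin (2 * θ - 2 * θ')| - |Real.sin (2 * θ + 2 * θ')|) * g θ')
      = -2 * Real.sin (2*θ) * Bf g θ := by
    rw [show -2 * Real.sin (2*θ) * Bf g θ
        = ∫ x in θ..(Real.pi/4), -2 * Real.sin (2*θ) * (Real.cos (2*x) * g x) from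
      (intervalIntegral.integral_const_mul _ _).symm]
    apply intervalIntegral.integral_congr
    intro x hx
    rw [uIcc_of_le hθ1] at hx
    obtain ⟨hx0, hx1⟩ := hx
    have e1 : |Real.sin (2 * θ - 2 * x)| = Real.sin (2 * x - 2 * θ) := by
      rw [show (2*θ - 2*x) = -(2*x - 2*θ) by ring, Real.sin_neg, abs_neg, abs_of_nonneg]
      apply Real.sin_nonneg_of_nonneg_of_le_pi <;> nlinarith [Real.pi_gt_three]
    have e2 : |Real.sin (2 * θ + 2 * x)| = Real.sin (2 * x + 2 * θ) := by
      rw [show (2*θ + 2*x) = 2*x + 2*θ by ring, abs_of_nonneg]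
      apply Real.sin_nonneg_of_nonneg_of_le_pi <;> nlinarith [Real.pi_gt_three]
    show (|Real.sin (2 * θ - 2 * x)| - |Real.sin (2 * θ + 2 * x)|) * g x = _
    rw [e1, e2, Real.sin_sub, Real.sin_add]
    ring
  rw [streamH, ← hsplit, h1, h2]
  ring

lemma hasDerivAt_Af (g : ℝ → ℝ) (hg : Continuous g) (θ : ℝ) :
    HasDerivAt (Af g) (Real.sin (2*θ) * g θ) θ := by
  have hc : Continuous fun x => Real.sin (2*x) * g x := by continuity
  exact intervalIntegral.integral_hasDerivAt_right (hc.intervalIntegrable _ _)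
    (hc.stronglyMeasurable.stronglyMeasurableAtFilter) hc.continuousAt

lemma hasDerivAt_Bf (g : ℝ → ℝ) (hg : Continuous g) (θ : ℝ) :
    HasDerivAt (Bf g) (-(Real.cos (2*θ) * g θ)) θ := by
  have hc : Continuous fun x => Real.cos (2*x) * g x := by continuity
  have h1 : HasDerivAt (fun u => ∫ x in (Real.pi/4)..u, Real.cos (2*x) * g x)
      (Real.cos (2*θ) * g θ) θ :=
    intervalIntegral.integral_hasDerivAt_right (hc.intervalIntegrable _ _)
      (hc.stronglyMeasurable.stronglyMeasurableAtFilter) hc.continuousAt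
  have : Bf g = fun u => -(∫ x in (Real.pi/4)..u, Real.cos (2*x) * g x) := by
    funext u; rw [Bf, intervalIntegral.integral_symm]
  rw [this]
  exact h1.neg

lemma continuous_Af (g : ℝ → ℝ) (hg : Continuous g) : Continuous (Af g) :=
  continuous_iff_continuousAt.mpr fun θ => (hasDerivAt_Af g hg θ).continuousAt

lemma continuous_Bf (g : ℝ → ℝ) (hg : Continuous g) : Continuous (Bf g) :=
  continuous_iff_continuousAt.mpr fun θ => (hasDerivAt_Bf g hg θ).continuousAt

lemma hasDerivAt_Phi (g : ℝ → ℝ) (hg : ContDiff ℝ 1 g) (θ : ℝ) :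
    HasDerivAt (Phi g)
      ((Real.cos (2*θ) * Af g θ + Real.sin (2*θ) * Bf g θ) * deriv g θ) θ := by
  have hgc : Continuous g := hg.continuous
  have hA := hasDerivAt_Af g hgc θ
  have hB := hasDerivAt_Bf g hgc θ
  have hcos : HasDerivAt (fun θ => Real.cos (2*θ)) (-2 * Real.sin (2*θ)) θ := by
    have := (Real.hasDerivAt_cos (2*θ)).comp θ ((hasDerivAt_id θ).const_mul 2)
    simpa [Function.comp_def, mul_comm] using this
  have hsin : HasDerivAt (fun θ => Real.sin (2*θ)) (2 * Real.cos (2*θ)) θ := by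
    have := (Real.hasDerivAt_sin (2*θ)).comp θ ((hasDerivAt_id θ).const_mul 2)
    simpa [Function.comp_def, mul_comm] using this
  have hgθ : HasDerivAt g (deriv g θ) θ := (hg.differentiable one_ne_zero θ).hasDerivAt
  have h := (((hcos.mul hA).add (hsin.mul hB)).mul hgθ).add
    ((hA.mul hA).add (hB.mul hB))
  have hfun : Phi g = (((fun θ => Real.cos (2 * θ)) * Af g + (fun θ => Real.sin (2 * θ)) * Bf g) * g
      + (Af g * Af g + Bf g * Bf g)) := by
    funext u; rw [Phi]; simp only [Pi.mul_apply, Pi.add_apply]; ring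
  rw [hfun]
  exact h.congr_deriv (by simp only [Pi.mul_apply, Pi.add_apply]; ring)

lemma hasDerivAt_mass (h : ℝ → ℝ → ℝ)
    (hC1 : ContDiff ℝ 1 (fun p : ℝ × ℝ => h p.1 p.2)) (t₀ : ℝ) :
    HasDerivAt (mass h)
      (∫ θ in (0:ℝ)..(Real.pi/4), fderiv ℝ (fun p : ℝ × ℝ => h p.1 p.2) (t₀, θ) (1, 0)) t₀ := by
  set Hu : ℝ × ℝ → ℝ := fun p => h p.1 p.2 with hHu
  have hHuc : Continuous Hu := hC1.continuous
  have hht : Continuous fun p : ℝ × ℝ => fderiv ℝ Hu p (1, 0) :=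
    (hC1.continuous_fderiv one_ne_zero).clm_apply continuous_const
  have hslice : ∀ (s θ : ℝ), HasDerivAt (fun u => h u θ) (fderiv ℝ Hu (s, θ) (1, 0)) s := by
    intro s θ
    exact ((hC1.differentiable one_ne_zero (s, θ)).hasFDerivAt).comp_hasDerivAt s
      ((hasDerivAt_id s).prodMk (hasDerivAt_const s θ))
  obtain ⟨M, hM⟩ : ∃ M, ∀ p ∈ (Icc (t₀-1) (t₀+1) ×ˢ Icc (0:ℝ) (Real.pi/4)),
      ‖fderiv ℝ Hu p (1, 0)‖ ≤ M := by
    obtain ⟨M, hM⟩ := (isCompact_Icc.prod isCompact_Icc).exists_bound_of_continuousOn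
      (hht.continuousOn)
    exact ⟨M, hM⟩
  have key := intervalIntegral.hasDerivAt_integral_of_dominated_loc_of_deriv_le
    (F := fun s θ => h s θ) (F' := fun s θ => fderiv ℝ Hu (s, θ) (1, 0))
    (x₀ := t₀) (a := (0:ℝ)) (b := Real.pi/4) (μ := volume) (bound := fun _ => M)
    (Metric.ball_mem_nhds t₀ one_pos)
    (Filter.Eventually.of_forall fun s =>
      ((hHuc.comp (continuous_const.prodMk continuous_id)).aestronglyMeasurable))
    ((hHuc.comp (continuous_const.prodMk continuous_id)).intervalIntegrable _ _)
    ((hht.comp (continuous_const.prodMk continuous_id)).aestronglyMeasurable)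
    (Filter.Eventually.of_forall fun θ hθ x hx => by
      apply hM
      constructor
      · have : |x - t₀| < 1 := by simpa [Real.dist_eq] using hx
        constructor <;> [linarith [neg_abs_le (x - t₀)]; linarith [le_abs_self (x - t₀)]]
      · have : θ ∈ Ioc (0:ℝ) (Real.pi/4) := by
          rwa [uIoc_of_le (by positivity : (0:ℝ) ≤ Real.pi/4)] at hθ
        exact ⟨this.1.le, this.2⟩)
    (intervalIntegrable_const)
    (Filter.Eventually.of_forall fun θ _ x _ => hslice x θ)
  exact key.2

/-- generic monotonicity from derivative bounds on `Ici 0` -/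
lemma monoIci {f f' : ℝ → ℝ} (hf : ∀ t ∈ Ici (0:ℝ), HasDerivAt f (f' t) t)
    (h0 : ∀ t ∈ Ici (0:ℝ), 0 ≤ f' t) : MonotoneOn f (Ici 0) := by
  apply monotoneOn_of_deriv_nonneg (convex_Ici 0)
    (fun t ht => (hf t ht).continuousAt.continuousWithinAt)
  · rw [interior_Ici]
    exact fun t ht => (hf t (mem_Ici.mpr (mem_Ioi.mp ht).le)).differentiableAt.differentiableWithinAt
  · rw [interior_Ici]
    intro t ht
    rw [(hf t (mem_Ici.mpr (mem_Ioi.mp ht).le)).deriv]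
    exact h0 t (mem_Ici.mpr (mem_Ioi.mp ht).le)

end OneDEulerAux

open OneDEulerAux

set_option maxHeartbeats 1000000 in
/-- L¹-decay for the 1D equation `∂ₜh + 2H ∂_θh = 0` with 4-fold symmetric, odd,
nonnegative data supported in `[0, ε]`:
`1/(t + I(0)⁻¹) ≤ I(t) ≤ 1/((1 − 8ε²)t + I(0)⁻¹)`. -/
theorem oneD_Euler_L1_decay (ε : ℝ) (hε0 : 0 < ε) (hε1 : ε ≤ 1 / 4)
    (h : ℝ → ℝ → ℝ)
    (hC1 : ContDiff ℝ 1 (fun p : ℝ × ℝ => h p.1 p.2))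
    (hper : ∀ t ≥ (0 : ℝ), ∀ θ : ℝ, h t (θ + 2 * Real.pi) = h t θ)
    (hsym : ∀ t ≥ (0 : ℝ), ∀ θ : ℝ, h t (θ + Real.pi / 2) = h t θ)
    (hodd : ∀ t ≥ (0 : ℝ), ∀ θ : ℝ, h t (-θ) = -h t θ)
    (hnonneg : ∀ t ≥ (0 : ℝ), ∀ θ ∈ Icc (0 : ℝ) (Real.pi / 4), 0 ≤ h t θ)
    (hsupp : ∀ t ≥ (0 : ℝ), ∀ θ ∈ Icc ε (Real.pi / 4), h t θ = 0)
    (hPDE : ∀ t ≥ (0 : ℝ), ∀ θ : ℝ,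
      deriv (fun s => h s θ) t + 2 * streamH (h t) θ * deriv (h t) θ = 0)
    (hI0 : 0 < mass h 0) :
    ∀ t ≥ (0 : ℝ),
      1 / (t + (mass h 0)⁻¹) ≤ mass h t ∧
        mass h t ≤ 1 / ((1 - 8 * ε ^ 2) * t + (mass h 0)⁻¹) := by
  have hπ4 : (0:ℝ) < Real.pi / 4 := by positivity
  have hεπ : ε ≤ Real.pi / 4 := by nlinarith [Real.pi_gt_three]
  set Hu : ℝ × ℝ → ℝ := fun p => h p.1 p.2 with hHu
  have hHuc : Continuous Hu := hC1.continuous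
  have hcont_ht : ∀ t : ℝ, Continuous (h t) := fun t =>
    hHuc.comp (continuous_const.prodMk continuous_id)
  have hC1_ht : ∀ t : ℝ, ContDiff ℝ 1 (h t) := fun t =>
    hC1.comp (contDiff_const.prodMk contDiff_id)
  have hsinc : Continuous fun x : ℝ => Real.sin (2*x) :=
    Real.continuous_sin.comp (continuous_const.mul continuous_id)
  have hcosc : Continuous fun x : ℝ => Real.cos (2*x) :=
    Real.continuous_cos.comp (continuous_const.mul continuous_id)
  set D : ℝ → ℝ := fun t => ∫ θ in (0:ℝ)..(Real.pi/4), fderiv ℝ Hu (t, θ) (1, 0) with hD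
  have hI' : ∀ t : ℝ, HasDerivAt (mass h) (D t) t := fun t => hasDerivAt_mass h hC1 t
  set S : ℝ → ℝ := fun t => Af (h t) (Real.pi/4) with hSdef
  set C : ℝ → ℝ := fun t => Bf (h t) 0 with hCdef
  -- derivative formula on Ici 0
  have hslice : ∀ (s θ : ℝ), HasDerivAt (fun u => h u θ) (fderiv ℝ Hu (s, θ) (1, 0)) s := by
    intro s θ
    exact ((hC1.differentiable one_ne_zero (s, θ)).hasFDerivAt).comp_hasDerivAt s
      ((hasDerivAt_id s).prodMk (hasDerivAt_const s θ))
  have hDeq : ∀ t ≥ (0:ℝ), D t = S t ^ 2 - C t ^ 2 := by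
    intro t ht
    have hg := hC1_ht t
    have hgc := hcont_ht t
    have e1 : ∀ θ : ℝ, fderiv ℝ Hu (t, θ) (1, 0)
        = -(2 * streamH (h t) θ * deriv (h t) θ) := by
      intro θ
      have := hPDE t ht θ
      have hd : deriv (fun s => h s θ) t = fderiv ℝ Hu (t, θ) (1, 0) := (hslice t θ).deriv
      linarith [this, hd.symm.le]
    have e2 : D t = ∫ θ in (0:ℝ)..(Real.pi/4),
        (Real.cos (2*θ) * Af (h t) θ + Real.sin (2*θ) * Bf (h t) θ) * deriv (h t) θ := by
      rw [hD]
      simp only [e1]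
      apply intervalIntegral.integral_congr
      intro θ hθ
      rw [uIcc_of_le hπ4.le] at hθ
      show -(2 * streamH (h t) θ * deriv (h t) θ) = _
      rw [streamH_eq (h t) hgc hθ]
      ring
    have hψcont : Continuous fun θ =>
        (Real.cos (2*θ) * Af (h t) θ + Real.sin (2*θ) * Bf (h t) θ) * deriv (h t) θ := by
      apply Continuous.mul _ (hg.continuous_deriv le_rfl)
      exact ((Real.continuous_cos.comp (continuous_const.mul continuous_id)).mul
        (continuous_Af (h t) hgc)).add
        ((Real.continuous_sin.comp (continuous_const.mul continuous_id)).mul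
        (continuous_Bf (h t) hgc))
    have e3 : (∫ θ in (0:ℝ)..(Real.pi/4),
        (Real.cos (2*θ) * Af (h t) θ + Real.sin (2*θ) * Bf (h t) θ) * deriv (h t) θ)
        = Phi (h t) (Real.pi/4) - Phi (h t) 0 :=
      intervalIntegral.integral_eq_sub_of_hasDerivAt
        (fun θ _ => hasDerivAt_Phi (h t) hg θ) (hψcont.intervalIntegrable _ _)
    have e4 : Phi (h t) (Real.pi/4) = S t ^ 2 := by
      rw [Phi, hSdef]
      have : Bf (h t) (Real.pi/4) = 0 := by rw [Bf, intervalIntegral.integral_same]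
      rw [this, show 2 * (Real.pi/4) = Real.pi/2 by ring, Real.cos_pi_div_two]
      ring
    have e5 : Phi (h t) 0 = C t ^ 2 := by
      rw [Phi, hCdef]
      have : Af (h t) 0 = 0 := by rw [Af, intervalIntegral.integral_same]
      rw [this]
      norm_num [Real.sin_zero]
    rw [e2, e3, e4, e5]
  -- basic nonnegativity and pointwise integral bounds for t ≥ 0
  have hInn : ∀ t ≥ (0:ℝ), 0 ≤ mass h t := by
    intro t ht
    exact intervalIntegral.integral_nonneg hπ4.le (fun u hu => hnonneg t ht u hu)
  have hS0 : ∀ t ≥ (0:ℝ), 0 ≤ S t := by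
    intro t ht
    apply intervalIntegral.integral_nonneg hπ4.le
    intro u hu
    apply mul_nonneg _ (hnonneg t ht u hu)
    apply Real.sin_nonneg_of_nonneg_of_le_pi <;> nlinarith [hu.1, hu.2, Real.pi_gt_three]
  have hSle : ∀ t ≥ (0:ℝ), S t ≤ 2 * ε * mass h t := by
    intro t ht
    have : 2 * ε * mass h t = ∫ θ in (0:ℝ)..(Real.pi/4), 2 * ε * h t θ :=
      (intervalIntegral.integral_const_mul _ _).symm
    rw [this]
    apply intervalIntegral.integral_mono_on hπ4.le
      ((hsinc.mul (hcont_ht t)).intervalIntegrable _ _)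
      ((continuous_const.mul (hcont_ht t)).intervalIntegrable _ _)
    intro x hx
    show Real.sin (2*x) * h t x ≤ 2 * ε * h t x
    rcases le_or_gt x ε with hxε | hxε
    · have h1 : Real.sin (2*x) ≤ 2 * ε := by
        calc Real.sin (2*x) ≤ 2*x := Real.sin_le (by linarith [hx.1])
        _ ≤ 2*ε := by linarith
      exact mul_le_mul_of_nonneg_right h1 (hnonneg t ht x hx)
    · rw [hsupp t ht x ⟨hxε.le, hx.2⟩, mul_zero, mul_zero]
  have hCle : ∀ t ≥ (0:ℝ), C t ≤ mass h t := by
    intro t ht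
    apply intervalIntegral.integral_mono_on hπ4.le
      ((hcosc.mul (hcont_ht t)).intervalIntegrable _ _)
      ((hcont_ht t).intervalIntegrable _ _)
    intro x hx
    have h0 := hnonneg t ht x hx
    show Real.cos (2*x) * h t x ≤ h t x
    nlinarith [Real.cos_le_one (2*x)]
  have hcos2ε0 : (0:ℝ) ≤ Real.cos (2*ε) := by
    apply Real.cos_nonneg_of_mem_Icc
    constructor <;> nlinarith [Real.pi_gt_three]
  have hCge : ∀ t ≥ (0:ℝ), Real.cos (2*ε) * mass h t ≤ C t := by
    intro t ht
    have : Real.cos (2*ε) * mass h t = ∫ θ in (0:ℝ)..(Real.pi/4), Real.cos (2*ε) * h t θ :=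
      (intervalIntegral.integral_const_mul _ _).symm
    rw [this]
    apply intervalIntegral.integral_mono_on hπ4.le
      ((continuous_const.mul (hcont_ht t)).intervalIntegrable _ _)
      ((hcosc.mul (hcont_ht t)).intervalIntegrable _ _)
    intro x hx
    show Real.cos (2*ε) * h t x ≤ Real.cos (2*x) * h t x
    rcases le_or_gt x ε with hxε | hxε
    · have h1 : Real.cos (2*ε) ≤ Real.cos (2*x) := by
        apply Real.cos_le_cos_of_nonneg_of_le_pi (by linarith [hx.1]) _ (by linarith)
        nlinarith [Real.pi_gt_three]
      exact mul_le_mul_of_nonneg_right h1 (hnonneg t ht x hx)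
    · rw [hsupp t ht x ⟨hxε.le, hx.2⟩, mul_zero, mul_zero]
  have hC0 : ∀ t ≥ (0:ℝ), 0 ≤ C t := by
    intro t ht
    calc (0:ℝ) ≤ Real.cos (2*ε) * mass h t := mul_nonneg hcos2ε0 (hInn t ht)
    _ ≤ C t := hCge t ht
  have hcosge : 1 - 2*ε^2 ≤ Real.cos (2*ε) := by
    have := Real.one_sub_sq_div_two_le_cos (x := 2*ε)
    nlinarith
  -- derivative bounds
  have hDub : ∀ t ≥ (0:ℝ), D t ≤ (8*ε^2 - 1) * (mass h t)^2 := by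
    intro t ht
    rw [hDeq t ht]
    have h1 : S t ^ 2 ≤ (2*ε*mass h t)^2 := by
      apply pow_le_pow_left₀ (hS0 t ht) (hSle t ht)
    have h2 : ((1 - 2*ε^2) * mass h t)^2 ≤ C t ^ 2 := by
      apply pow_le_pow_left₀ (mul_nonneg (by nlinarith) (hInn t ht))
      calc (1 - 2*ε^2) * mass h t ≤ Real.cos (2*ε) * mass h t :=
        mul_le_mul_of_nonneg_right hcosge (hInn t ht)
      _ ≤ C t := hCge t ht
    nlinarith [sq_nonneg (ε^2 * mass h t), sq_nonneg (mass h t), hInn t ht]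
  have hDlb : ∀ t ≥ (0:ℝ), -((mass h t)^2) ≤ D t := by
    intro t ht
    rw [hDeq t ht]
    have h1 : C t ^ 2 ≤ (mass h t)^2 := pow_le_pow_left₀ (hC0 t ht) (hCle t ht) 2
    nlinarith [sq_nonneg (S t)]
  have hcoef : (0:ℝ) < 1 - 8*ε^2 := by nlinarith
  set M : ℝ := mass h 0 with hM
  -- antitone: mass h t ≤ M
  have hIleM : ∀ t ≥ (0:ℝ), mass h t ≤ M := by
    intro t ht
    have := monoIci (f := fun t => -mass h t) (f' := fun t => -(D t))
      (fun s _ => (hI' s).neg)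
      (fun s hs => by
        have := hDub s hs
        show 0 ≤ -D s
        nlinarith [sq_nonneg (mass h s)])
    have h0t := this self_mem_Ici ht ht
    simpa using h0t
  -- positivity: mass h t > 0
  have hIpos : ∀ t ≥ (0:ℝ), 0 < mass h t := by
    intro t ht
    have hexp : ∀ s : ℝ, HasDerivAt (fun u => Real.exp (M*u)) (M * Real.exp (M*s)) s := by
      intro s
      have := (Real.hasDerivAt_exp (M*s)).comp s ((hasDerivAt_id s).const_mul M)
      simpa [Function.comp_def, mul_comm] using this
    have hg : ∀ s : ℝ, HasDerivAt (fun u => mass h u * Real.exp (M*u))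
        (D s * Real.exp (M*s) + mass h s * (M * Real.exp (M*s))) s :=
      fun s => (hI' s).mul (hexp s)
    have hmono := monoIci (f := fun u => mass h u * Real.exp (M*u))
      (f' := fun s => D s * Real.exp (M*s) + mass h s * (M * Real.exp (M*s)))
      (fun s _ => hg s)
      (fun s hs => by
        have h1 := hDlb s hs
        have h2 := hIleM s hs
        have h3 := hInn s hs
        have h4 := Real.exp_pos (M*s)
        have h5 : 0 ≤ D s + M * mass h s := by
          nlinarith [mul_nonneg h3 (sub_nonneg.mpr h2)]
        show 0 ≤ D s * Real.exp (M*s) + mass h s * (M * Real.exp (M*s))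
        nlinarith [mul_nonneg h5 h4.le])
    have h0t := hmono self_mem_Ici ht ht
    simp only [mul_zero, Real.exp_zero, mul_one] at h0t
    nlinarith [Real.exp_pos (M*t), hI0, hInn t ht, h0t]
  -- the reciprocal J
  set J : ℝ → ℝ := fun t => (mass h t)⁻¹ with hJ
  have hJ' : ∀ t ∈ Ici (0:ℝ), HasDerivAt J (-(D t) / (mass h t)^2) t := by
    intro t ht
    exact (hI' t).inv (ne_of_gt (hIpos t ht))
  have hJpos : ∀ t ≥ (0:ℝ), 0 < J t := fun t ht => inv_pos.mpr (hIpos t ht)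
  -- upper bound for J: J t ≤ t + M⁻¹
  have hJub : ∀ t ≥ (0:ℝ), J t ≤ t + M⁻¹ := by
    intro t ht
    have hmono := monoIci (f := fun u => u - J u)
      (f' := fun s => 1 - (-(D s) / (mass h s)^2))
      (fun s hs => (hasDerivAt_id s).sub (hJ' s hs))
      (fun s hs => by
        have h1 := hDlb s hs
        have h2 := hIpos s hs
        have h3 : -(D s) / (mass h s)^2 ≤ 1 := by
          rw [div_le_one (by positivity)]
          nlinarith [hDlb s hs]
        show (0:ℝ) ≤ 1 - (-(D s) / (mass h s)^2)
        linarith)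
    have h0t := hmono self_mem_Ici ht ht
    simp only [zero_sub] at h0t
    have : J 0 = M⁻¹ := by rw [hJ]
    linarith [h0t, this.le, this.ge]
  -- lower bound for J: (1-8ε²)t + M⁻¹ ≤ J t
  have hJlb : ∀ t ≥ (0:ℝ), (1 - 8*ε^2) * t + M⁻¹ ≤ J t := by
    intro t ht
    have hmono := monoIci (f := fun u => J u - (1 - 8*ε^2) * u)
      (f' := fun s => -(D s) / (mass h s)^2 - (1 - 8*ε^2))
      (fun s hs => (hJ' s hs).sub (by
        simpa using (hasDerivAt_id s).const_mul (1 - 8*ε^2)))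
      (fun s hs => by
        have h1 := hDub s hs
        have h2 := hIpos s hs
        have h3 : (1 - 8*ε^2) ≤ -(D s) / (mass h s)^2 := by
          rw [le_div_iff₀ (by positivity)]
          nlinarith [hDub s hs]
        show (0:ℝ) ≤ -(D s) / (mass h s)^2 - (1 - 8*ε^2)
        linarith)
    have h0t := hmono self_mem_Ici ht ht
    simp only [mul_zero, sub_zero] at h0t
    have : J 0 = M⁻¹ := by rw [hJ]
    linarith [h0t, this.le]
  -- conclude
  intro t ht
  have hIt := hIpos t ht
  have hMi : (0:ℝ) < M⁻¹ := inv_pos.mpr hI0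
  constructor
  · have h2 : (mass h t)⁻¹ ≤ t + M⁻¹ := hJub t ht
    rw [div_le_iff₀ (by linarith : (0:ℝ) < t + M⁻¹)]
    calc (1:ℝ) = mass h t * (mass h t)⁻¹ := (mul_inv_cancel₀ hIt.ne').symm
    _ ≤ mass h t * (t + M⁻¹) := mul_le_mul_of_nonneg_left h2 hIt.le
  · have hden : 0 < (1 - 8*ε^2) * t + M⁻¹ := by nlinarith
    have h2 : (1 - 8*ε^2) * t + M⁻¹ ≤ (mass h t)⁻¹ := hJlb t ht
    rw [le_div_iff₀ hden]
    calc mass h t * ((1 - 8*ε^2) * t + M⁻¹) ≤ mass h t * (mass h t)⁻¹ :=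
      mul_le_mul_of_nonneg_left h2 hIt.le
    _ = 1 := mul_inv_cancel₀ hIt.ne'
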